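/- Let k : ℝⁿ × ℝⁿ → ℝ be a continuously differentiable kernel. For finite families y⁺₁, …, y⁺_M ∈ ℝⁿ and y⁻₁, …, y⁻_N ∈ ℝⁿ define V⁺(x) = (1/M) Σₘ k(x, y⁺ₘ)(y⁺ₘ − x), V⁻(x) = (1/N) Σⱼ k(x, y⁻ⱼ)(y⁻ⱼ − x), and the unnormalized drift field V = V⁺ − V⁻. If V is conservative (has symmetric Jacobian everywhere) for every choice of finite families y⁺₁, …, y⁺_M and y⁻₁, …, y⁻_N, then V⁺ is conservative for every finite family y⁺₁, …, y⁺_M, and likewise V⁻ is conservative for every finite family y⁻₁, …, y⁻_N. -/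

import Mathlib

noncomputable section

section aux
variable {n : ℕ}

lemma drift_diff_field (k : EuclideanSpace ℝ (Fin n) → EuclideanSpace ℝ (Fin n) → ℝ)
    (hk : ContDiff ℝ 1 (fun p : EuclideanSpace ℝ (Fin n) × EuclideanSpace ℝ (Fin n) => k p.1 p.2))
    (M : ℕ) (yp : Fin M → EuclideanSpace ℝ (Fin n)) :
    Differentiable ℝ (fun x' : EuclideanSpace ℝ (Fin n) =>
      (1 / (M : ℝ)) • ∑ m, k x' (yp m) • (yp m - x')) := by
  apply Differentiable.fun_const_smul
  apply Differentiable.fun_sum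
  intro m _
  have hky : Differentiable ℝ (fun x' : EuclideanSpace ℝ (Fin n) => k x' (yp m)) :=
    (hk.differentiable one_ne_zero).comp (differentiable_id.prodMk (differentiable_const _))
  exact hky.smul ((differentiable_const _).sub differentiable_id)

lemma drift_gval (k : EuclideanSpace ℝ (Fin n) → EuclideanSpace ℝ (Fin n) → ℝ)
    (hk : ContDiff ℝ 1 (fun p : EuclideanSpace ℝ (Fin n) × EuclideanSpace ℝ (Fin n) => k p.1 p.2))
    (x v : EuclideanSpace ℝ (Fin n)) :
    fderiv ℝ (fun x' : EuclideanSpace ℝ (Fin n) =>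
      (1 / ((1:ℕ) : ℝ)) • ∑ _l : Fin 1, k x' x • (x - x')) x v = -(k x x • v) := by
  have heq : (fun x' : EuclideanSpace ℝ (Fin n) =>
      (1 / ((1:ℕ) : ℝ)) • ∑ _l : Fin 1, k x' x • (x - x'))
      = fun x' => k x' x • (x - x') := by
    funext x'
    simp
  rw [heq]
  have hc : DifferentiableAt ℝ (fun x' : EuclideanSpace ℝ (Fin n) => k x' x) x :=
    ((hk.differentiable one_ne_zero).comp (differentiable_id.prodMk (differentiable_const _))) x
  have hu : HasFDerivAt (fun x' : EuclideanSpace ℝ (Fin n) => x - x')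
      ((0 : EuclideanSpace ℝ (Fin n) →L[ℝ] EuclideanSpace ℝ (Fin n))
        - ContinuousLinearMap.id ℝ _) x :=
    (hasFDerivAt_const x x).sub (hasFDerivAt_id x)
  have h := hc.hasFDerivAt.fun_smul hu
  rw [h.fderiv]
  simp [sub_self, smul_smul]

end aux


/-- For a C¹ kernel `k`, if the unnormalized drift field
`V = V⁺ − V⁻` has a symmetric Jacobian everywhere (is conservative) for every choice of
finite families `y⁺₁,…,y⁺_M` and `y⁻₁,…,y⁻_N`, then `V⁺` has a symmetric Jacobian
everywhere for every finite family, and likewise `V⁻`. -/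
theorem subfields_conservative_of_drift_conservative {n : ℕ}
    (k : EuclideanSpace ℝ (Fin n) → EuclideanSpace ℝ (Fin n) → ℝ)
    (hk : ContDiff ℝ 1 (fun p : EuclideanSpace ℝ (Fin n) × EuclideanSpace ℝ (Fin n) =>
      k p.1 p.2))
    (hcons : ∀ (M N : ℕ), 0 < M → 0 < N →
      ∀ (yp : Fin M → EuclideanSpace ℝ (Fin n)) (yn : Fin N → EuclideanSpace ℝ (Fin n))
        (x : EuclideanSpace ℝ (Fin n)) (i j : Fin n),
      fderiv ℝ (fun x' => (1 / (M : ℝ)) • ∑ m, k x' (yp m) • (yp m - x')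
                        - (1 / (N : ℝ)) • ∑ l, k x' (yn l) • (yn l - x')) x
          (EuclideanSpace.single j 1) i =
        fderiv ℝ (fun x' => (1 / (M : ℝ)) • ∑ m, k x' (yp m) • (yp m - x')
                          - (1 / (N : ℝ)) • ∑ l, k x' (yn l) • (yn l - x')) x
          (EuclideanSpace.single i 1) j) :
    (∀ (M : ℕ), 0 < M → ∀ (yp : Fin M → EuclideanSpace ℝ (Fin n))
        (x : EuclideanSpace ℝ (Fin n)) (i j : Fin n),
      fderiv ℝ (fun x' => (1 / (M : ℝ)) • ∑ m, k x' (yp m) • (yp m - x')) x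
          (EuclideanSpace.single j 1) i =
        fderiv ℝ (fun x' => (1 / (M : ℝ)) • ∑ m, k x' (yp m) • (yp m - x')) x
          (EuclideanSpace.single i 1) j) ∧
    (∀ (N : ℕ), 0 < N → ∀ (yn : Fin N → EuclideanSpace ℝ (Fin n))
        (x : EuclideanSpace ℝ (Fin n)) (i j : Fin n),
      fderiv ℝ (fun x' => (1 / (N : ℝ)) • ∑ l, k x' (yn l) • (yn l - x')) x
          (EuclideanSpace.single j 1) i =
        fderiv ℝ (fun x' => (1 / (N : ℝ)) • ∑ l, k x' (yn l) • (yn l - x')) x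
          (EuclideanSpace.single i 1) j) := by
  
  have hsingle : ∀ (i j : Fin n), (EuclideanSpace.single j (1:ℝ)) i = (EuclideanSpace.single i (1:ℝ)) j := by
    intro i j
    simp [EuclideanSpace.single_apply, eq_comm]
  constructor
  · intro M hM yp x i j
    have h := hcons M 1 hM one_pos yp (fun _ => x) x i j
    have hf := drift_diff_field k hk M yp
    have hg := drift_diff_field k hk 1 (fun _ => x)
    rw [fderiv_fun_sub (hf x) (hg x)] at h
    simp only [ContinuousLinearMap.sub_apply, PiLp.sub_apply] at h
    have hg1 := drift_gval k hk x (EuclideanSpace.single j 1)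
    have hg2 := drift_gval k hk x (EuclideanSpace.single i 1)
    rw [hg1, hg2] at h
    have : (-(k x x • EuclideanSpace.single j (1:ℝ))) i = (-(k x x • EuclideanSpace.single i (1:ℝ))) j := by
      by_cases hij : i = j
      · subst hij; rfl
      · simp [EuclideanSpace.single_apply, hij, Ne.symm hij]
    rw [this] at h
    exact sub_left_inj.mp h
  · intro N hN yn x i j
    have h := hcons 1 N one_pos hN (fun _ => x) yn x i j
    have hf := drift_diff_field k hk N yn
    have hg := drift_diff_field k hk 1 (fun _ => x)
    rw [fderiv_fun_sub (hg x) (hf x)] at h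
    simp only [ContinuousLinearMap.sub_apply, PiLp.sub_apply] at h
    have hg1 := drift_gval k hk x (EuclideanSpace.single j 1)
    have hg2 := drift_gval k hk x (EuclideanSpace.single i 1)
    rw [hg1, hg2] at h
    have : (-(k x x • EuclideanSpace.single j (1:ℝ))) i = (-(k x x • EuclideanSpace.single i (1:ℝ))) j := by
      by_cases hij : i = j
      · subst hij; rfl
      · simp [EuclideanSpace.single_apply, hij, Ne.symm hij]
    rw [this] at h
    exact sub_right_inj.mp h
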